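/- Fix n ≥ 2 and let A be the mammillary compartmental matrix in the parameters a_{01}, a_{21}, …, a_{n1}, a_{12}, …, a_{1n}. Then for 0 ≤ i ≤ n−1, the coefficient c_i of λ^i in det(λI − A) equals a_{01}E_{n−i−1}(a_{12},…,a_{1n}) + Σ_{k=2}^{n} a_{k1}E_{n−i−1}(a_{12},…,a_{1n} with a_{1k} omitted) + E_{n−i}(a_{12},…,a_{1n}); and for 0 ≤ i ≤ n−2, the coefficient d_i of λ^i in det(λI − A_{11}) equals E_{n−i−1}(a_{12},…,a_{1n}). -/

import Mathlib

/-- Index `k : Fin (m+2)` recast in `Fin (m+1)` as `k - 1`. -/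
def subOne {m : ℕ} (k : Fin (m + 2)) : Fin (m + 1) :=
  ⟨k.val - 1, by have := k.isLt; omega⟩

/-- The mammillary (star) compartmental matrix with `n = m + 2` compartments
(`aK1 k = a_{k+2,1}`, `a1K k = a_{1,k+2}`). -/
def mamMatrix {R : Type*} [CommRing R] (m : ℕ) (a01 : R) (aK1 a1K : Fin (m + 1) → R) :
    Matrix (Fin (m + 2)) (Fin (m + 2)) R :=
  Matrix.of fun i j =>
    if i = 0 then (if j = 0 then -a01 - ∑ k, aK1 k else a1K (subOne j))
    else if j = 0 then aK1 (subOne i)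
    else if i = j then -(a1K (subOne i)) else 0

/-- The `k`-th elementary symmetric polynomial of the quantities `f x`, `x ∈ s`
(with `E_0 = 1` and `E_k = 0` for `k` larger than the number of quantities). -/
def esymmOf {ι R : Type*} [DecidableEq ι] [CommRing R] (s : Finset ι) (f : ι → R) (k : ℕ) : R :=
  ∑ t ∈ s.powersetCard k, ∏ x ∈ t, f x

open Polynomial Matrix Finset Equiv

section Aux

variable {R : Type*} [CommRing R]

lemma arrow_det {m : ℕ} (M : Matrix (Fin (m+2)) (Fin (m+2)) R)
    (h : ∀ i j, i ≠ j → i ≠ 0 → j ≠ 0 → M i j = 0) :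
    M.det = ∏ i, M i i
      - ∑ k ∈ Finset.univ.erase 0, M 0 k * M k 0 * ∏ i ∈ (Finset.univ.erase 0).erase k, M i i := by
  classical
  set S : Finset (Perm (Fin (m+2))) :=
    insert 1 ((Finset.univ.erase 0).image fun k => Equiv.swap 0 k) with hS
  rw [Matrix.det_apply]
  rw [← Finset.sum_subset (Finset.subset_univ S)]
  · have h1 : (1 : Perm (Fin (m+2))) ∉ (Finset.univ.erase 0).image fun k => Equiv.swap 0 k := by
      intro hmem
      obtain ⟨k, hk, hk2⟩ := Finset.mem_image.mp hmem
      have := congrFun (congrArg (fun (e : Perm (Fin (m+2))) => (e : Fin (m+2) → Fin (m+2))) hk2) 0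
      simp [Equiv.swap_apply_left] at this
      exact (Finset.mem_erase.mp hk).1 this
    rw [hS, Finset.sum_insert h1, Finset.sum_image]
    · have hid : (Equiv.Perm.sign (1 : Perm (Fin (m+2)))) • ∏ i, M ((1 : Perm (Fin (m+2))) i) i
          = ∏ i, M i i := by simp
      rw [hid]
      have hterm : ∀ k ∈ Finset.univ.erase (0 : Fin (m+2)),
          (Equiv.Perm.sign (Equiv.swap 0 k)) • ∏ i, M (Equiv.swap 0 k i) i
          = -(M 0 k * M k 0 * ∏ i ∈ (Finset.univ.erase 0).erase k, M i i) := by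
        intro k hk
        have hk0 : k ≠ 0 := (Finset.mem_erase.mp hk).1
        rw [Equiv.Perm.sign_swap (Ne.symm hk0)]
        have hprod : ∏ i, M (Equiv.swap 0 k i) i
            = M k 0 * (M 0 k * ∏ i ∈ (Finset.univ.erase 0).erase k, M i i) := by
          rw [← Finset.mul_prod_erase Finset.univ _ (Finset.mem_univ 0)]
          rw [← Finset.mul_prod_erase (Finset.univ.erase 0) _
              (Finset.mem_erase.mpr ⟨hk0, Finset.mem_univ k⟩)]
          rw [Equiv.swap_apply_left, Equiv.swap_apply_right]
          congr 1
          congr 1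
          apply Finset.prod_congr rfl
          intro i hi
          have hi0 : i ≠ 0 := (Finset.mem_erase.mp ((Finset.mem_erase.mp hi).2)).1
          have hik : i ≠ k := (Finset.mem_erase.mp hi).1
          rw [Equiv.swap_apply_of_ne_of_ne hi0 hik]
        rw [hprod]
        simp
        ring
      rw [Finset.sum_congr rfl hterm, Finset.sum_neg_distrib, ← sub_eq_add_neg]
    · intro a ha b hb hab
      have := congrFun (congrArg (fun (e : Perm (Fin (m+2))) => (e : Fin (m+2) → Fin (m+2))) hab) 0
      simpa [Equiv.swap_apply_left] using this
  · intro σ _ hσ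
    have key : ∃ i, σ i ≠ i ∧ σ i ≠ 0 ∧ i ≠ 0 := by
      by_contra hc
      push_neg at hc
      have hc' : ∀ i, σ i = i ∨ σ i = 0 ∨ i = 0 := by
        intro i
        by_cases ha : σ i = i
        · exact Or.inl ha
        by_cases hb : σ i = 0
        · exact Or.inr (Or.inl hb)
        exact Or.inr (Or.inr (hc i ha hb))
      apply hσ
      rw [hS]
      by_cases h0 : σ 0 = 0
      · have hσ1 : σ = 1 := by
          ext i
          by_cases hi : i = 0
          · simp [hi, h0]
          · rcases hc' i with h'|h'|h'
            · simp [h']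
            · exact absurd (σ.injective (h'.trans h0.symm)) hi
            · exact absurd h' hi
        rw [hσ1]
        exact Finset.mem_insert_self _ _
      · have hσk : σ (σ 0) = 0 := by
          rcases hc' (σ 0) with h'|h'|h'
          · exact absurd (σ.injective h') h0
          · exact h'
          · exact absurd h' h0
        have hσeq : σ = Equiv.swap 0 (σ 0) := by
          ext i
          by_cases hi0 : i = 0
          · simp [hi0, Equiv.swap_apply_left]
          · by_cases hik : i = σ 0
            · rw [hik, Equiv.swap_apply_right, hσk]
            · rcases hc' i with h'|h'|h'
              · rw [h', Equiv.swap_apply_of_ne_of_ne hi0 hik]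
              · exact absurd (σ.injective (h'.trans hσk.symm)) hik
              · exact absurd h' hi0
        rw [hσeq]
        exact Finset.mem_insert_of_mem
          (Finset.mem_image_of_mem _ (Finset.mem_erase.mpr ⟨h0, Finset.mem_univ _⟩))
    obtain ⟨i, h1, h2, h3⟩ := key
    rw [show (∏ j, M (σ j) j) = 0 from
      Finset.prod_eq_zero (Finset.mem_univ i) (h _ _ h1 h2 h3), smul_zero]

lemma coeff_prodXC {ι : Type*} [DecidableEq ι] (s : Finset ι) (f : ι → R) {i : ℕ}
    (h : i ≤ s.card) :
    (∏ x ∈ s, (X + C (f x))).coeff i = esymmOf s f (s.card - i) :=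
  Finset.prod_X_add_C_coeff s f h

lemma coeff_prodXC_zero {ι : Type*} [DecidableEq ι] (s : Finset ι) (f : ι → R) {i : ℕ}
    (h : s.card < i) :
    (∏ x ∈ s, (X + C (f x))).coeff i = 0 := by
  have h1 : ∀ x ∈ s, (X + C (f x)).natDegree ≤ 1 := fun x _ =>
    le_trans (Polynomial.natDegree_add_le _ _) (by simp [Polynomial.natDegree_X_le])
  have h2 := Finset.sum_le_card_nsmul s (fun x => (X + C (f x)).natDegree) 1 h1
  have hd : (∏ x ∈ s, (X + C (f x))).natDegree ≤ s.card :=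
    le_trans (Polynomial.natDegree_prod_le s fun x => X + C (f x)) (by simpa using h2)
  exact Polynomial.coeff_eq_zero_of_natDegree_lt (lt_of_le_of_lt hd h)

lemma esymmOf_zero {ι : Type*} [DecidableEq ι] (s : Finset ι) (f : ι → R) :
    esymmOf s f 0 = 1 := by
  simp [esymmOf]

lemma esymmOf_big {ι : Type*} [DecidableEq ι] (s : Finset ι) (f : ι → R) {k : ℕ}
    (h : s.card < k) : esymmOf s f k = 0 := by
  rw [esymmOf, Finset.powersetCard_eq_empty.mpr h, Finset.sum_empty]

lemma esymm_split {ι : Type*} [DecidableEq ι] (s : Finset ι) (f : ι → R) {k : ι}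
    (hk : k ∈ s) (j : ℕ) :
    esymmOf s f (j+1) = esymmOf (s.erase k) f (j+1) + f k * esymmOf (s.erase k) f j := by
  unfold esymmOf
  conv_lhs => rw [← Finset.insert_erase hk]
  rw [Finset.powersetCard_succ_insert (Finset.notMem_erase _ _), Finset.sum_union, Finset.sum_image]
  · congr 1
    rw [Finset.mul_sum]
    apply Finset.sum_congr rfl
    intro t ht
    rw [Finset.mem_powersetCard] at ht
    rw [Finset.prod_insert (fun hkt => Finset.notMem_erase k s (ht.1 hkt))]
  · intro t ht u hu htu
    rw [Finset.mem_coe, Finset.mem_powersetCard] at ht hu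
    have hkt : k ∉ t := fun h => Finset.notMem_erase k s (ht.1 h)
    have hku : k ∉ u := fun h => Finset.notMem_erase k s (hu.1 h)
    rw [← Finset.erase_insert hkt, ← Finset.erase_insert hku, htu]
  · rw [Finset.disjoint_left]
    intro t ht htim
    rw [Finset.mem_powersetCard] at ht
    obtain ⟨u, hu, rfl⟩ := Finset.mem_image.mp htim
    exact Finset.notMem_erase k s (ht.1 (Finset.mem_insert_self k u))

lemma subOne_succ {m : ℕ} (i : Fin (m+1)) : subOne i.succ = i := by
  apply Fin.ext
  simp [subOne, Fin.val_succ]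

lemma erase_zero_eq_image {m : ℕ} :
    (Finset.univ : Finset (Fin (m+2))).erase 0 = Finset.univ.image Fin.succ := by
  ext i
  simp only [Finset.mem_erase, Finset.mem_univ, and_true, Finset.mem_image, true_and]
  constructor
  · intro hi
    exact ⟨⟨i.val - 1, by have := i.isLt; omega⟩, by
      apply Fin.ext
      simp [Fin.val_succ]
      have := i.isLt
      have : i.val ≠ 0 := fun h => hi (Fin.ext h)
      omega⟩
  · rintro ⟨j, rfl⟩
    exact Fin.succ_ne_zero j

lemma sum_erase_zero {m : ℕ} (g : Fin (m+2) → R) :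
    ∑ k ∈ Finset.univ.erase 0, g k = ∑ k : Fin (m+1), g k.succ := by
  rw [erase_zero_eq_image, Finset.sum_image (fun a _ b _ h => Fin.succ_injective _ h)]

end Aux

theorem mam_coeffs {R : Type*} [CommRing R] (m : ℕ) (a01 : R) (aK1 a1K : Fin (m + 1) → R) :
    (∀ i : ℕ, i ≤ m + 1 →
      (mamMatrix m a01 aK1 a1K).charpoly.coeff i
        = a01 * esymmOf Finset.univ a1K (m + 1 - i)
          + ∑ k : Fin (m + 1), aK1 k * esymmOf (Finset.univ.erase k) a1K (m + 1 - i)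
          + esymmOf Finset.univ a1K (m + 2 - i)) ∧
    (∀ i : ℕ, i ≤ m →
      ((mamMatrix m a01 aK1 a1K).submatrix Fin.succ Fin.succ).charpoly.coeff i
        = esymmOf Finset.univ a1K (m + 1 - i)) := by
  classical
  set MM := mamMatrix m a01 aK1 a1K with hMM
  -- basic entries
  have hdiag : ∀ k : Fin (m+1), MM k.succ k.succ = -(a1K k) := by
    intro k
    simp [hMM, mamMatrix, Fin.succ_ne_zero, subOne_succ]
  have hoff : ∀ k j : Fin (m+1), k ≠ j → MM k.succ j.succ = 0 := by
    intro k j hkj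
    have : k.succ ≠ j.succ := fun h => hkj (Fin.succ_injective _ h)
    simp [hMM, mamMatrix, Fin.succ_ne_zero, this]
  -- the charpoly of the full matrix
  have hP := fun (i : ℕ) (h : i ≤ m + 1) => coeff_prodXC (R := R) Finset.univ a1K
    (by simpa using h)
  constructor
  · intro i hi
    have harrow := arrow_det (charmatrix MM) (by
      intro a b hab ha hb
      rw [charmatrix_apply_ne _ _ _ hab]
      obtain ⟨a', rfl⟩ : ∃ a', a = Fin.succ a' := by
        refine ⟨⟨a.val - 1, by have := a.isLt; omega⟩, Fin.ext ?_⟩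
        have : a.val ≠ 0 := fun h => ha (Fin.ext h)
        simp [Fin.val_succ]; omega
      obtain ⟨b', rfl⟩ : ∃ b', b = Fin.succ b' := by
        refine ⟨⟨b.val - 1, by have := b.isLt; omega⟩, Fin.ext ?_⟩
        have : b.val ≠ 0 := fun h => hb (Fin.ext h)
        simp [Fin.val_succ]; omega
      rw [hoff _ _ (fun h => hab (congrArg Fin.succ h))]
      simp)
    rw [Matrix.charpoly, harrow]
    -- rewrite the diagonal product
    have h00 : charmatrix MM 0 0 = X - C (-a01 - ∑ k, aK1 k) := by
      rw [charmatrix_apply_eq]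
      congr 1
    have hdiagc : ∀ k : Fin (m+1), charmatrix MM k.succ k.succ = X + C (a1K k) := by
      intro k
      rw [charmatrix_apply_eq, hdiag]
      simp [sub_neg_eq_add]
    have hprodd : ∏ j, charmatrix MM j j
        = (X - C (-a01 - ∑ k, aK1 k)) * ∏ k : Fin (m+1), (X + C (a1K k)) := by
      rw [Fin.prod_univ_succ, h00]
      congr 1
      exact Finset.prod_congr rfl fun k _ => hdiagc k
    have h0k : ∀ k : Fin (m+1), charmatrix MM 0 k.succ = -C (a1K k) := by
      intro k
      rw [charmatrix_apply_ne _ _ _ (Fin.succ_ne_zero k).symm]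
      simp [hMM, mamMatrix, Fin.succ_ne_zero, subOne_succ]
    have hk0 : ∀ k : Fin (m+1), charmatrix MM k.succ 0 = -C (aK1 k) := by
      intro k
      rw [charmatrix_apply_ne _ _ _ (Fin.succ_ne_zero k)]
      simp [hMM, mamMatrix, Fin.succ_ne_zero, subOne_succ]
    have hsum : ∑ k ∈ Finset.univ.erase 0, charmatrix MM 0 k * charmatrix MM k 0 *
          ∏ j ∈ (Finset.univ.erase 0).erase k, charmatrix MM j j
        = ∑ k : Fin (m+1), C (a1K k * aK1 k) *
          ∏ j ∈ Finset.univ.erase k, (X + C (a1K j)) := by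
      rw [sum_erase_zero]
      apply Finset.sum_congr rfl
      intro k _
      rw [h0k, hk0, neg_mul_neg, ← C_mul]
      congr 1
      rw [erase_zero_eq_image, ← Finset.image_erase (Fin.succ_injective _),
        Finset.prod_image (fun a _ b _ h => Fin.succ_injective _ h)]
      exact Finset.prod_congr rfl fun j _ => hdiagc j
    rw [hprodd, hsum]
    -- now pure polynomial coefficient computation
    set P : R[X] := ∏ k : Fin (m+1), (X + C (a1K k)) with hPdef
    have hcard : (Finset.univ : Finset (Fin (m+1))).card = m + 1 := by simp
    have hPcoeff : P.coeff i = esymmOf Finset.univ a1K (m + 1 - i) := by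
      rw [hPdef, coeff_prodXC _ _ (by omega), hcard]
    rw [Polynomial.coeff_sub, sub_mul, Polynomial.coeff_sub, Polynomial.coeff_C_mul,
      Polynomial.finset_sum_coeff]
    have hXP : (X * P).coeff i = esymmOf Finset.univ a1K (m + 2 - i) := by
      cases i with
      | zero =>
        rw [Polynomial.mul_coeff_zero, Polynomial.coeff_X_zero, zero_mul]
        rw [esymmOf_big _ _ (by omega)]
      | succ j =>
        rw [Polynomial.coeff_X_mul, hPdef, coeff_prodXC _ _ (by omega), hcard]
        congr 1
        omega
    rw [hXP, hPcoeff]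
    have hcarde : ∀ k : Fin (m+1), ((Finset.univ : Finset (Fin (m+1))).erase k).card = m := by
      intro k
      rw [Finset.card_erase_of_mem (Finset.mem_univ k)]
      simp
    by_cases him : i ≤ m
    · have hQc : ∀ k ∈ (Finset.univ : Finset (Fin (m+1))),
          (C (a1K k * aK1 k) * ∏ j ∈ Finset.univ.erase k, (X + C (a1K j))).coeff i
          = a1K k * aK1 k * esymmOf (Finset.univ.erase k) a1K (m - i) := by
        intro k _
        rw [Polynomial.coeff_C_mul, coeff_prodXC _ _ (by rw [hcarde]; omega), hcarde]
      rw [Finset.sum_congr rfl hQc]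
      have key : ∀ k ∈ (Finset.univ : Finset (Fin (m+1))),
          a1K k * aK1 k * esymmOf (Finset.univ.erase k) a1K (m - i)
          = aK1 k * esymmOf Finset.univ a1K (m + 1 - i)
            - aK1 k * esymmOf (Finset.univ.erase k) a1K (m + 1 - i) := by
        intro k _
        have hsplit := esymm_split Finset.univ a1K (Finset.mem_univ k) (m - i)
        rw [show m + 1 - i = (m - i) + 1 from by omega, hsplit]
        ring
      rw [Finset.sum_congr rfl key, Finset.sum_sub_distrib, ← Finset.sum_mul]
      ring
    · have hieq : i = m + 1 := by omega
      subst hieq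
      have hQc : ∀ k ∈ (Finset.univ : Finset (Fin (m+1))),
          (C (a1K k * aK1 k) * ∏ j ∈ Finset.univ.erase k, (X + C (a1K j))).coeff (m+1)
          = 0 := by
        intro k _
        rw [Polynomial.coeff_C_mul, coeff_prodXC_zero _ _ (by rw [hcarde]; omega), mul_zero]
      rw [Finset.sum_congr rfl hQc, Finset.sum_const, smul_zero]
      rw [show m + 1 - (m + 1) = 0 from by omega, esymmOf_zero]
      have hone : ∀ k ∈ (Finset.univ : Finset (Fin (m+1))),
          aK1 k * esymmOf (Finset.univ.erase k) a1K 0 = aK1 k := by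
        intro k _
        rw [esymmOf_zero, mul_one]
      rw [Finset.sum_congr rfl hone]
      ring
  · intro i hi
    have hsubm : MM.submatrix Fin.succ Fin.succ = Matrix.diagonal (fun k => -(a1K k)) := by
      ext a b
      by_cases hab : a = b
      · subst hab
        simp [Matrix.submatrix_apply, hdiag]
      · simp [Matrix.submatrix_apply, hoff a b hab, Matrix.diagonal_apply_ne _ hab]
    rw [hsubm]
    have hcp : (Matrix.diagonal (fun k : Fin (m+1) => -(a1K k))).charpoly
        = ∏ k : Fin (m+1), (X + C (a1K k)) := by
      rw [Matrix.charpoly]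
      have : charmatrix (Matrix.diagonal (fun k : Fin (m+1) => -(a1K k)))
          = Matrix.diagonal (fun k => X + C (a1K k)) := by
        ext a b
        by_cases hab : a = b
        · subst hab
          simp [sub_neg_eq_add]
        · simp [charmatrix_apply_ne _ _ _ hab, Matrix.diagonal_apply_ne _ hab]
      rw [this, Matrix.det_diagonal]
    rw [hcp, coeff_prodXC _ _ (by simp; omega)]
    congr 1
    simp
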